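/- Win-stay-lose-shift is a uniformly strict subgame perfect strategy when 2R > T + P: there exist constants C₀ > 0 and thresholds δ₀, p₀ < 1 (depending only on T, R, P, S) such that for all δ > δ₀, p > p₀, any deviating strategy s, and any finite history h_k at which s first deviates from w, the equilibrium-path payoffs satisfy U_{δ,p}(h_{w,w/h_k}) − U_{δ,p}(h_{s,w/h_k}) > (1 − p²δ) C₀; one may take C₀ = min{P − S, 2R − (T + P) − ε} for small ε. -/

import Mathlib

open Finset

/-- A (pure) strategy in the repeated prisoners' dilemma
(`true` = cooperate, `false` = defect). -/
abbrev Strategy := List (Bool × Bool) → Bool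

/-- The same history from the other player's viewpoint. -/
def swapHist (h : List (Bool × Bool)) : List (Bool × Bool) := h.map Prod.swap

/-- The no-mistake continuation path from a seed history. -/
def pathFrom (s₁ s₂ : Strategy) (h : List (Bool × Bool)) : ℕ → List (Bool × Bool)
  | 0 => h
  | k + 1 =>
    pathFrom s₁ s₂ h k ++
      [(s₁ (pathFrom s₁ s₂ h k), s₂ (swapHist (pathFrom s₁ s₂ h k)))]

/-- The action pair played `k` periods after the seed on the no-mistake path. -/
def pairAt (s₁ s₂ : Strategy) (h : List (Bool × Bool)) (k : ℕ) : Bool × Bool :=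
  (s₁ (pathFrom s₁ s₂ h k), s₂ (swapHist (pathFrom s₁ s₂ h k)))

/-- Stage-game payoff for player one. -/
def payoff (T R P S : ℝ) : Bool × Bool → ℝ
  | (true, true) => R
  | (true, false) => S
  | (false, true) => T
  | (false, false) => P

/-- Equilibrium-path payoff with trembles of accuracy `p`, with the
normalization `(1 - p²δ)/p² · ∑ δ^t p^(2t+2) u`. -/
noncomputable def UEq (δ p T R P S : ℝ) (s₁ s₂ : Strategy)
    (h : List (Bool × Bool)) : ℝ :=
  ((1 - p ^ 2 * δ) / p ^ 2) *
    ∑' t : ℕ, δ ^ t * p ^ (2 * t + 2) * payoff T R P S (pairAt s₁ s₂ h t)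

/-- Win-stay-lose-shift: cooperate initially; repeat the previous action after
receiving `T` or `R`, switch after receiving `S` or `P`. -/
def wsls : Strategy := fun h =>
  match h.getLast? with
  | none => true
  | some (a, b) => a == b

lemma wsls_concat (l : List (Bool × Bool)) (ab : Bool × Bool) :
    wsls (l ++ [ab]) = (ab.1 == ab.2) := by
  rcases ab with ⟨a, b⟩
  simp [wsls, List.getLast?_concat]

lemma wsls_swapHist (h : List (Bool × Bool)) : wsls (swapHist h) = wsls h := by
  unfold wsls swapHist
  rw [List.getLast?_map]
  rcases hl : h.getLast? with _ | ⟨a, b⟩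
  · rfl
  · cases a <;> cases b <;> rfl

lemma pathFrom_succ (s₁ s₂ : Strategy) (h : List (Bool × Bool)) (t : ℕ) :
    pathFrom s₁ s₂ h (t + 1) = pathFrom s₁ s₂ h t ++ [pairAt s₁ s₂ h t] := rfl

lemma swapHist_concat (l : List (Bool × Bool)) (ab : Bool × Bool) :
    swapHist (l ++ [ab]) = swapHist l ++ [(ab.2, ab.1)] := by
  simp [swapHist, Prod.swap]

lemma pairAt_fst_succ (s₂ : Strategy) (h : List (Bool × Bool)) (t : ℕ) :
    (pairAt wsls s₂ h (t + 1)).1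
      = ((pairAt wsls s₂ h t).1 == (pairAt wsls s₂ h t).2) := by
  show wsls (pathFrom wsls s₂ h (t + 1)) = _
  rw [pathFrom_succ, wsls_concat]

lemma pairAt_snd_succ (s₁ : Strategy) (h : List (Bool × Bool)) (t : ℕ) :
    (pairAt s₁ wsls h (t + 1)).2
      = ((pairAt s₁ wsls h t).2 == (pairAt s₁ wsls h t).1) := by
  show wsls (swapHist (pathFrom s₁ wsls h (t + 1))) = _
  rw [pathFrom_succ, swapHist_concat, wsls_concat]

lemma pairAt_zero (s₁ s₂ : Strategy) (h : List (Bool × Bool)) :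
    pairAt s₁ s₂ h 0 = (s₁ h, s₂ (swapHist h)) := rfl

lemma pairAt_ww_zero (h : List (Bool × Bool)) :
    pairAt wsls wsls h 0 = (wsls h, wsls h) := by
  rw [pairAt_zero, wsls_swapHist]

lemma pairAt_ww_eq (h : List (Bool × Bool)) (t : ℕ) :
    (pairAt wsls wsls h t).1 = (pairAt wsls wsls h t).2 := by
  induction t with
  | zero => rw [pairAt_ww_zero]
  | succ t ih => rw [pairAt_fst_succ, pairAt_snd_succ, ih]

lemma pairAt_ww_succ (h : List (Bool × Bool)) (t : ℕ) :
    pairAt wsls wsls h (t + 1) = (true, true) := by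
  have h1 : (pairAt wsls wsls h (t + 1)).1 = true := by
    rw [pairAt_fst_succ, pairAt_ww_eq]; exact beq_self_eq_true _
  have h2 : (pairAt wsls wsls h (t + 1)).2 = true := by
    rw [← pairAt_ww_eq]; exact h1
  rw [Prod.ext_iff]; exact ⟨h1, h2⟩

lemma payoff_abs_le (T R P S : ℝ) (q : Bool × Bool) :
    |payoff T R P S q| ≤ |T| + |R| + |P| + |S| := by
  have hT := abs_nonneg T; have hR := abs_nonneg R
  have hP := abs_nonneg P; have hS := abs_nonneg S
  rcases q with ⟨a, b⟩
  cases a <;> cases b <;> simp [payoff] <;> linarith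

lemma payoff_snd_false {T R P S : ℝ} (hPS : S < P) (q : Bool × Bool)
    (hq : q.2 = false) : payoff T R P S q ≤ P := by
  rcases q with ⟨a, b⟩
  cases a <;> cases b <;> simp_all [payoff] <;> linarith

lemma payoff_ne_FT {T R P S : ℝ} (hRP : P < R) (hPS : S < P) (q : Bool × Bool)
    (hq : q ≠ (false, true)) : payoff T R P S q ≤ R := by
  rcases q with ⟨a, b⟩
  cases a <;> cases b <;> simp_all [payoff] <;> linarith


lemma summable_geom_mul {x C : ℝ} (hx0 : 0 ≤ x) (hx1 : x < 1) {g : ℕ → ℝ}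
    (hg : ∀ t, |g t| ≤ C) : Summable (fun t => x ^ t * g t) := by
  apply Summable.of_norm_bounded (g := fun t => C * x ^ t)
    ((summable_geometric_of_lt_one hx0 hx1).mul_left C)
  intro t
  rw [Real.norm_eq_abs, abs_mul, abs_pow, abs_of_nonneg hx0, mul_comm]
  exact mul_le_mul_of_nonneg_right (hg t) (pow_nonneg hx0 t)

lemma aux_tsum {x T R P Cb : ℝ} (hx0 : 0 < x) (hx1 : x < 1) (hRP : P < R)
    (w : ℕ → ℝ) (B : ℕ → Bool)
    (hwb : ∀ t, |w t| ≤ Cb)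
    (hB1 : ∀ t, B t = true → R - T ≤ w t)
    (hB2 : ∀ t, B t = true → R - P ≤ w (t + 1))
    (hB3 : ∀ t, B t = true → B (t + 1) = false)
    (hB4 : ∀ t, B t = false → 0 ≤ w t)
    (hB01 : B 0 = false → B 1 = false) :
    ((R - T) + x * (R - P)) * (∑' t : ℕ, x ^ t * (if B t then (1 : ℝ) else 0))
      + (if B 0 then 0 else w 0 + x * w 1) ≤ ∑' t : ℕ, x ^ t * w t := by
  set χ : ℕ → ℝ := fun t => if B t then (1 : ℝ) else 0 with hχdef
  have hχb : ∀ t, |χ t| ≤ 1 := by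
    intro t; simp only [hχdef]; split <;> norm_num
  have hχs : Summable (fun t => x ^ t * χ t) := summable_geom_mul hx0.le hx1 hχb
  set d : ℕ → ℝ := fun t => (x ^ t * χ t) * (R - T) with hddef
  set e : ℕ → ℝ := fun t => Nat.casesOn t (0 : ℝ) (fun k => (x * (R - P)) * (x ^ k * χ k)) with hedef
  set f : ℕ → ℝ := fun t => if B 0 then 0 else
      (if t = 0 then w 0 else if t = 1 then x * w 1 else 0) with hfdef
  have hd : Summable d := hχs.mul_right _
  have hgs : Summable (fun k => (x * (R - P)) * (x ^ k * χ k)) := hχs.mul_left _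
  have he : Summable e := (summable_nat_add_iff 1).mp hgs
  have hf : Summable f := by
    apply summable_of_ne_finset_zero (s := {0, 1})
    intro b hb
    simp only [Finset.mem_insert, Finset.mem_singleton, not_or] at hb
    simp [hfdef, hb.1, hb.2]
  have hsumw : Summable (fun t => x ^ t * w t) := summable_geom_mul hx0.le hx1 hwb
  have dval : ∀ t, B t = true → d t = x ^ t * (R - T) := by
    intro t hb; simp [hddef, hχdef, hb]
  have dval0 : ∀ t, B t = false → d t = 0 := by
    intro t hb; simp [hddef, hχdef, hb]
  have eval : ∀ k, B k = true → e (k + 1) = x * (R - P) * x ^ k := by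
    intro k hb; simp [hedef, hχdef, hb]
  have eval0 : ∀ k, B k = false → e (k + 1) = 0 := by
    intro k hb; simp [hedef, hχdef, hb]
  have fvalT : B 0 = true → ∀ t, f t = 0 := by
    intro hb t; simp [hfdef, hb]
  have fval0 : B 0 = false → f 0 = w 0 := by intro hb; simp [hfdef, hb]
  have fval1 : B 0 = false → f 1 = x * w 1 := by intro hb; simp [hfdef, hb]
  have fval2 : ∀ k, f (k + 2) = 0 := by
    intro k; simp [hfdef]
  have hde : ∀ t, d t + e t + f t ≤ x ^ t * w t := by
    intro t
    match t with
    | 0 =>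
      have e0 : e 0 = 0 := rfl
      rcases hb0 : B 0 with _ | _
      · rw [dval0 0 hb0, e0, fval0 hb0]
        simp
      · rw [dval 0 hb0, e0, fvalT hb0 0]
        have := hB1 0 hb0
        simp only [pow_zero, one_mul]
        linarith
    | 1 =>
      rcases hb0 : B 0 with _ | _
      · have hb1 : B 1 = false := hB01 hb0
        have he1 : e 1 = 0 := by simpa using eval0 0 hb0
        rw [dval0 1 hb1, he1, fval1 hb0]
        simp
      · have hb1 : B 1 = false := by simpa using hB3 0 hb0
        have h2 : R - P ≤ w 1 := by simpa using hB2 0 hb0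
        have he1 : e 1 = x * (R - P) * x ^ 0 := by simpa using eval 0 hb0
        rw [dval0 1 hb1, he1, fvalT hb0 1]
        simp only [pow_zero, mul_one, pow_one, add_zero, zero_add]
        nlinarith
    | (k + 2) =>
      rcases hb1 : B (k + 1) with _ | _
      · rcases hb2 : B (k + 2) with _ | _
        · rw [dval0 _ hb2, eval0 _ hb1, fval2]
          have := hB4 _ hb2
          simp only [add_zero, zero_add]
          positivity
        · rw [dval _ hb2, eval0 _ hb1, fval2]
          have := hB1 _ hb2
          simp only [add_zero, zero_add]
          nlinarith [pow_pos hx0 (k + 2)]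
      · have hb2 : B (k + 2) = false := hB3 _ hb1
        have h2 : R - P ≤ w (k + 2) := hB2 _ hb1
        rw [dval0 _ hb2, eval _ hb1, fval2]
        simp only [add_zero, zero_add]
        calc x * (R - P) * x ^ (k + 1) = x ^ (k + 2) * (R - P) := by ring
          _ ≤ x ^ (k + 2) * w (k + 2) :=
            mul_le_mul_of_nonneg_left h2 (pow_nonneg hx0.le _)
  have key : ∑' t : ℕ, (d t + e t + f t) ≤ ∑' t : ℕ, x ^ t * w t :=
    Summable.tsum_le_tsum hde ((hd.add he).add hf) hsumw
  have hsplit : ∑' t : ℕ, (d t + e t + f t)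
      = (∑' t, d t) + (∑' t, e t) + (∑' t, f t) := by
    rw [Summable.tsum_add (hd.add he) hf, Summable.tsum_add hd he]
  have hdval : ∑' t, d t = (∑' t, x ^ t * χ t) * (R - T) := tsum_mul_right
  have heval : ∑' t, e t = (x * (R - P)) * (∑' t, x ^ t * χ t) := by
    rw [Summable.tsum_eq_zero_add he]
    show (0 : ℝ) + ∑' t : ℕ, (x * (R - P)) * (x ^ t * χ t) = _
    rw [zero_add, tsum_mul_left]
  have hfval : ∑' t, f t = (if B 0 then 0 else w 0 + x * w 1) := by
    rcases hb0 : B 0 with _ | _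
    · rw [tsum_eq_sum (s := {0, 1})]
      · simp [hfdef, hb0, Finset.sum_insert, Finset.mem_singleton]
      · intro b hb
        simp only [Finset.mem_insert, Finset.mem_singleton, not_or] at hb
        simp [hfdef, hb.1, hb.2]
    · simp [hfdef, hb0]
  rw [hsplit, hdval, heval, hfval] at key
  calc ((R - T) + x * (R - P)) * (∑' t : ℕ, x ^ t * χ t)
        + (if B 0 then 0 else w 0 + x * w 1)
      = (∑' t, x ^ t * χ t) * (R - T) + (x * (R - P)) * (∑' t, x ^ t * χ t)
        + (if B 0 then 0 else w 0 + x * w 1) := by ring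
    _ ≤ ∑' t : ℕ, x ^ t * w t := key

lemma UEq_eq (δ p T R P S : ℝ) (s₁ s₂ : Strategy) (h : List (Bool × Bool))
    (hp : p ≠ 0) :
    UEq δ p T R P S s₁ s₂ h
      = (1 - p ^ 2 * δ) *
          ∑' t : ℕ, (p ^ 2 * δ) ^ t * payoff T R P S (pairAt s₁ s₂ h t) := by
  unfold UEq
  have hcongr : ∀ t : ℕ,
      δ ^ t * p ^ (2 * t + 2) * payoff T R P S (pairAt s₁ s₂ h t)
        = p ^ 2 * ((p ^ 2 * δ) ^ t * payoff T R P S (pairAt s₁ s₂ h t)) := by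
    intro t; rw [pow_add, pow_mul, mul_pow]; ring
  rw [tsum_congr hcongr, tsum_mul_left, ← mul_assoc,
    div_mul_cancel₀ _ (pow_ne_zero 2 hp)]


theorem wsls_uniformly_strict_subgame_perfect
    (T R P S : ℝ) (hTR : R < T) (hRP : P < R) (hPS : S < P)
    (heff : T + S < 2 * R) (hTP : T + P < 2 * R)
    (ε : ℝ) (hε0 : 0 < ε) (hε1 : ε < 2 * R - (T + P)) :
    ∃ C₀ δ₀ p₀ : ℝ,
      C₀ = min (P - S) (2 * R - (T + P) - ε) ∧ 0 < C₀ ∧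
      0 ≤ δ₀ ∧ δ₀ < 1 ∧ 0 ≤ p₀ ∧ p₀ < 1 ∧
      ∀ δ p : ℝ, δ₀ < δ → δ < 1 → p₀ < p → p < 1 →
        ∀ s : Strategy, ∀ h : List (Bool × Bool), s h ≠ wsls h →
          (1 - p ^ 2 * δ) * C₀ <
            UEq δ p T R P S wsls wsls h - UEq δ p T R P S s wsls h := by
  have hRP0 : (0:ℝ) < R - P := by linarith
  set a : ℝ := max (1 - ε / (R - P)) 0 with hadef
  have ha0 : 0 ≤ a := le_max_right _ _
  have ha1 : a < 1 := by
    apply max_lt _ one_pos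
    have : 0 < ε / (R - P) := div_pos hε0 hRP0
    linarith
  refine ⟨min (P - S) (2 * R - (T + P) - ε), (2 + a) / 3, (2 + a) / 3,
    rfl, lt_min (by linarith) (by linarith), by linarith, by linarith,
    by linarith, by linarith, ?_⟩
  intro δ p hδr hδ1 hpr hp1 s h hdev
  have hδ0 : 0 < δ := by linarith
  have hp0 : 0 < p := by linarith
  set x := p ^ 2 * δ with hxdef
  have hx0 : 0 < x := by positivity
  have hx1 : x < 1 := by nlinarith
  have hxa : a < x := by
    have hsq : 0 < (1 - a) ^ 2 := pow_pos (by linarith) 2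
    have hcube : a < ((2 + a) / 3) ^ 3 := by
      nlinarith [mul_pos hsq (show (0:ℝ) < a + 8 by linarith)]
    have h2 : ((2 + a) / 3) ^ 2 < p ^ 2 := by nlinarith
    have h3 : ((2 + a) / 3) ^ 3 < p ^ 2 * δ := by
      nlinarith [mul_pos (pow_pos hp0 2) (show 0 < δ - (2 + a) / 3 by linarith),
        mul_pos (show (0:ℝ) < (2 + a) / 3 by linarith)
          (sub_pos.mpr h2)]
    calc a < ((2 + a) / 3) ^ 3 := hcube
      _ < x := h3
  have hKgt : 2 * R - (T + P) - ε < (R - T) + x * (R - P) := by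
    have h1 : 1 - ε / (R - P) < x := lt_of_le_of_lt (le_max_left _ _) hxa
    have h2 := mul_lt_mul_of_pos_right h1 hRP0
    rw [sub_mul, one_mul, div_mul_cancel₀ _ (ne_of_gt hRP0)] at h2
    linarith
  have hK0 : 0 < (R - T) + x * (R - P) := by linarith
  -- path facts
  have hq0 : pairAt s wsls h 0 = (s h, wsls h) := by
    rw [pairAt_zero, wsls_swapHist]
  have hu1succ : ∀ t, payoff T R P S (pairAt wsls wsls h (t + 1)) = R := by
    intro t; rw [pairAt_ww_succ]; rfl
  have hqsnd : ∀ t, (pairAt s wsls h (t + 1)).2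
      = ((pairAt s wsls h t).2 == (pairAt s wsls h t).1) :=
    fun t => pairAt_snd_succ s h t
  set w : ℕ → ℝ := fun t =>
    payoff T R P S (pairAt wsls wsls h t) - payoff T R P S (pairAt s wsls h t)
    with hwdef
  set B : ℕ → Bool := fun t => decide (pairAt s wsls h t = (false, true))
    with hBdef
  have hwb : ∀ t, |w t| ≤ 2 * (|T| + |R| + |P| + |S|) := by
    intro t
    rw [hwdef]
    simp only [sub_eq_add_neg]
    refine (abs_add_le _ _).trans ?_
    rw [abs_neg]
    have h1 := payoff_abs_le T R P S (pairAt wsls wsls h t)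
    have h2 := payoff_abs_le T R P S (pairAt s wsls h t)
    linarith
  have hB1 : ∀ t, B t = true → R - T ≤ w t := by
    intro t hb
    have hq : pairAt s wsls h t = (false, true) := of_decide_eq_true hb
    have hu2 : payoff T R P S (pairAt s wsls h t) = T := by rw [hq]; rfl
    rw [hwdef]
    cases t with
    | zero =>
      rw [hq0] at hq
      have hc : wsls h = true := by
        have := congrArg Prod.snd hq; simpa using this
      have hu1 : payoff T R P S (pairAt wsls wsls h 0) = R := by
        rw [pairAt_ww_zero, hc]; rfl
      simp only
      rw [hu1, hu2]
    | succ k =>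
      simp only
      rw [hu1succ k, hu2]
  have hB2 : ∀ t, B t = true → R - P ≤ w (t + 1) := by
    intro t hb
    have hq : pairAt s wsls h t = (false, true) := of_decide_eq_true hb
    have hsnd : (pairAt s wsls h (t + 1)).2 = false := by
      rw [hqsnd t, hq]; rfl
    have hu2 : payoff T R P S (pairAt s wsls h (t + 1)) ≤ P :=
      payoff_snd_false hPS _ hsnd
    rw [hwdef]; simp only
    rw [hu1succ t]
    linarith
  have hB3 : ∀ t, B t = true → B (t + 1) = false := by
    intro t hb
    have hq : pairAt s wsls h t = (false, true) := of_decide_eq_true hb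
    have hsnd : (pairAt s wsls h (t + 1)).2 = false := by
      rw [hqsnd t, hq]; rfl
    rw [hBdef]
    apply decide_eq_false
    intro hcon
    rw [hcon] at hsnd
    simp at hsnd
  have hB4 : ∀ t, B t = false → 0 ≤ w t := by
    intro t hb
    have hq : pairAt s wsls h t ≠ (false, true) := of_decide_eq_false hb
    have hu2 : payoff T R P S (pairAt s wsls h t) ≤ R :=
      payoff_ne_FT hRP hPS _ hq
    rw [hwdef]
    cases t with
    | zero =>
      cases hc : wsls h with
      | true =>
        have hu1 : payoff T R P S (pairAt wsls wsls h 0) = R := by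
          rw [pairAt_ww_zero, hc]; rfl
        simp only; rw [hu1]; linarith
      | false =>
        have hu1 : payoff T R P S (pairAt wsls wsls h 0) = P := by
          rw [pairAt_ww_zero, hc]; rfl
        have hsnd : (pairAt s wsls h 0).2 = false := by
          rw [hq0, hc]
        have hu2' : payoff T R P S (pairAt s wsls h 0) ≤ P :=
          payoff_snd_false hPS _ hsnd
        simp only; rw [hu1]; linarith
    | succ k =>
      simp only; rw [hu1succ k]; linarith
  -- if B 0 is false then the seed must have wsls h = false and s h = true
  have hcfalse : B 0 = false → wsls h = false ∧ s h = true := by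
    intro hb0
    have hq : pairAt s wsls h 0 ≠ (false, true) := of_decide_eq_false hb0
    cases hc : wsls h with
    | true =>
      have hsh : s h = false := by
        rw [hc] at hdev
        exact Bool.eq_false_iff.mpr hdev
      exfalso; apply hq; rw [hq0, hc, hsh]
    | false =>
      have hsh : s h = true := by
        cases hsh' : s h with
        | true => rfl
        | false => exact absurd (hsh'.trans hc.symm) hdev
      exact ⟨rfl, hsh⟩
  have hB01 : B 0 = false → B 1 = false := by
    intro hb0
    obtain ⟨hc, hsh⟩ := hcfalse hb0
    have hq0v : pairAt s wsls h 0 = (true, false) := by rw [hq0, hc, hsh]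
    have hsnd : (pairAt s wsls h 1).2 = false := by
      have := hqsnd 0
      rw [hq0v] at this
      simpa using this
    rw [hBdef]
    apply decide_eq_false
    intro hcon
    rw [hcon] at hsnd
    simp at hsnd
  -- apply the series lemma
  have hkey := aux_tsum (T := T) (Cb := 2 * (|T| + |R| + |P| + |S|))
    hx0 hx1 hRP w B hwb hB1 hB2 hB3 hB4 hB01
  -- the main comparison
  have hs1 : Summable (fun t => x ^ t * payoff T R P S (pairAt wsls wsls h t)) :=
    summable_geom_mul hx0.le hx1 (fun t => payoff_abs_le T R P S _)
  have hs2 : Summable (fun t => x ^ t * payoff T R P S (pairAt s wsls h t)) :=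
    summable_geom_mul hx0.le hx1 (fun t => payoff_abs_le T R P S _)
  have hU : UEq δ p T R P S wsls wsls h - UEq δ p T R P S s wsls h
      = (1 - x) * ∑' t : ℕ, x ^ t * w t := by
    rw [UEq_eq δ p T R P S wsls wsls h (ne_of_gt hp0),
      UEq_eq δ p T R P S s wsls h (ne_of_gt hp0), ← hxdef, ← mul_sub]
    congr 1
    rw [← Summable.tsum_sub hs1 hs2]
    exact tsum_congr fun t => by rw [hwdef]; ring
  have hχnn : ∀ j : ℕ, 0 ≤ x ^ j * (if B j then (1:ℝ) else 0) := by
    intro j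
    apply mul_nonneg (pow_nonneg hx0.le j)
    split <;> norm_num
  have hχs : Summable (fun t => x ^ t * (if B t then (1:ℝ) else 0)) := by
    apply summable_geom_mul hx0.le hx1 (C := 1)
    intro t; split <;> norm_num
  have hD : min (P - S) (2 * R - (T + P) - ε) < ∑' t : ℕ, x ^ t * w t := by
    cases hb0 : B 0 with
    | true =>
      have hM1 : 1 ≤ ∑' t : ℕ, x ^ t * (if B t then (1:ℝ) else 0) := by
        have := Summable.le_tsum hχs 0 (fun j _ => hχnn j)
        rw [hb0] at this
        simpa using this
      rw [hb0] at hkey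
      simp only [if_true, add_zero] at hkey
      have hc1 : min (P - S) (2 * R - (T + P) - ε) ≤ 2 * R - (T + P) - ε :=
        min_le_right _ _
      nlinarith [hkey, hM1, hK0, hKgt]
    | false =>
      obtain ⟨hc, hsh⟩ := hcfalse hb0
      have hq0v : pairAt s wsls h 0 = (true, false) := by rw [hq0, hc, hsh]
      have hw0 : w 0 = P - S := by
        rw [hwdef]
        simp only
        rw [pairAt_ww_zero, hc, hq0v]
        show P - S = P - S
        rfl
      have hw1 : R - P ≤ w 1 := by
        have hsnd : (pairAt s wsls h 1).2 = false := by
          have := hqsnd 0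
          rw [hq0v] at this
          simpa using this
        have hu2 : payoff T R P S (pairAt s wsls h 1) ≤ P :=
          payoff_snd_false hPS _ hsnd
        have hu1 : payoff T R P S (pairAt wsls wsls h 1) = R := hu1succ 0
        rw [hwdef]; simp only
        rw [hu1]; linarith
      rw [hb0] at hkey
      simp only [Bool.false_eq_true, if_false] at hkey
      have hM0 : 0 ≤ ∑' t : ℕ, x ^ t * (if B t then (1:ℝ) else 0) :=
        tsum_nonneg hχnn
      have hc1 : min (P - S) (2 * R - (T + P) - ε) ≤ P - S := min_le_left _ _
      have hxw1 : x * (R - P) ≤ x * w 1 := mul_le_mul_of_nonneg_left hw1 hx0.le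
      have hxRP : 0 < x * (R - P) := mul_pos hx0 hRP0
      have hKM : 0 ≤ (R - T + x * (R - P)) * (∑' t : ℕ, x ^ t * (if B t then (1:ℝ) else 0)) :=
        mul_nonneg hK0.le hM0
      linarith [hkey]
  rw [hU]
  exact mul_lt_mul_of_pos_left hD (by linarith : 0 < 1 - x)
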